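/- Let C ≥ 1, δ ∈ (0, 1/3], ε ∈ (0, δ/10]. Define on [ε/2, ε] the functions f₁(r) = 4/(2εδ − 3ε²)·(r − ε/2)² − 1 and assume f₂'(r) ≤ (−16C + 2εδ)/(εδ)·(r − ε/2) − ε and 0 ≤ f₁'(r) ≤ 5/(2εδ)·(r − ε/2). Then f₁(r)·f₂'(r) − 2C·f₁'(r) ≥ (7/8)·ε for all r ∈ [ε/2, ε]. -/

import Mathlib

set_option maxHeartbeats 1600000 in
/-- Case i estimate in the Lutz twist construction. -/
theorem lutz_case_i (C δ ε : ℝ) (hC : 1 ≤ C) (hδ0 : 0 < δ) (hδ : δ ≤ 1 / 3)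
    (hε0 : 0 < ε) (hε : ε ≤ δ / 10)
    (f₁ f₁' f₂' : ℝ → ℝ)
    (hf₁ : ∀ r ∈ Set.Icc (ε / 2) ε,
      f₁ r = 4 / (2 * ε * δ - 3 * ε ^ 2) * (r - ε / 2) ^ 2 - 1)
    (hf₂' : ∀ r ∈ Set.Icc (ε / 2) ε,
      f₂' r ≤ (-16 * C + 2 * ε * δ) / (ε * δ) * (r - ε / 2) - ε)
    (hf₁'nonneg : ∀ r ∈ Set.Icc (ε / 2) ε, 0 ≤ f₁' r)
    (hf₁' : ∀ r ∈ Set.Icc (ε / 2) ε, f₁' r ≤ 5 / (2 * ε * δ) * (r - ε / 2)) :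
    ∀ r ∈ Set.Icc (ε / 2) ε, f₁ r * f₂' r - 2 * C * f₁' r ≥ 7 / 8 * ε := by
  intro r hr
  obtain ⟨h1, h2⟩ := hr
  have hεδ : 0 < ε * δ := by positivity
  have hden : 0 < 2 * ε * δ - 3 * ε ^ 2 := by nlinarith
  have hs0 : 0 ≤ r - ε / 2 := by linarith
  have hs : r - ε / 2 ≤ ε / 2 := by linarith
  have hf1 := hf₁ r ⟨h1, h2⟩
  have hf2 := hf₂' r ⟨h1, h2⟩
  have hd1 := hf₁'nonneg r ⟨h1, h2⟩
  have hd2 := hf₁' r ⟨h1, h2⟩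
  set u : ℝ := (r - ε / 2) / (ε * δ) with hu
  have hu0 : 0 ≤ u := div_nonneg hs0 hεδ.le
  have huv : ε * δ * u = r - ε / 2 := by
    rw [hu, mul_comm]; exact div_mul_cancel₀ _ hεδ.ne'
  clear_value u
  clear hu
  -- rewrite the bounds in terms of u
  have hf2' : f₂' r ≤ (-16 * C + 2 * ε * δ) * u - ε := by
    have e : (-16 * C + 2 * ε * δ) / (ε * δ) * (ε * δ * u) = (-16 * C + 2 * ε * δ) * u := by
      field_simp
    rw [← huv, e] at hf2
    exact hf2
  have hd2' : f₁' r ≤ 5 / 2 * u := by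
    have e : 5 / (2 * ε * δ) * (ε * δ * u) = 5 / 2 * u := by
      field_simp
    rw [← huv, e] at hd2
    exact hd2
  -- f₁ ≤ -7/8
  have hA : f₁ r ≤ -(7 / 8) := by
    rw [hf1]
    have key : 4 / (2 * ε * δ - 3 * ε ^ 2) * (r - ε / 2) ^ 2 ≤ 1 / 8 := by
      rw [div_mul_eq_mul_div, div_le_iff₀ hden]
      nlinarith [sq_nonneg (r - ε / 2), mul_pos hε0 hδ0]
    linarith
  -- f₂' ≤ 0
  have hB : f₂' r ≤ 0 := by
    nlinarith [mul_nonneg (le_trans zero_le_one hC) hu0,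
      mul_nonneg (mul_nonneg hε0.le hδ0.le) hu0]
  have hP : 0 ≤ (-(f₁ r) - 7 / 8) * (-(f₂' r)) :=
    mul_nonneg (by linarith) (by linarith)
  have hεδsmall : ε * δ ≤ 1 / 90 := by nlinarith
  have hQ : 0 ≤ (9 * C - 7 / 4 * (ε * δ)) * u := by
    apply mul_nonneg _ hu0
    nlinarith
  have hR : 2 * C * f₁' r ≤ 2 * C * (5 / 2 * u) := by
    apply mul_le_mul_of_nonneg_left hd2'
    linarith
  have hM1 : f₁ r * f₂' r ≥ -(7 / 8) * f₂' r := by nlinarith [hP]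
  have hM2 : 2 * C * f₁' r ≤ 5 * (C * u) := by nlinarith [hR]
  have hM3 : -(7 / 8) * f₂' r ≥ 14 * (C * u) - 7 / 4 * (ε * δ * u) + 7 / 8 * ε := by
    nlinarith [hf2']
  have hM4 : 9 * (C * u) - 7 / 4 * (ε * δ * u) ≥ 0 := by nlinarith [hQ]
  linarith [hM1, hM2, hM3, hM4]
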